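/- Let x̄, d ∈ ℝ^n, let a = (a_1, …, a_ω) be an index tuple with 𝓕^a(x̄, d) < 0, and let ρ ∈ (0, 1). Then there exists α̃ > 0 such that for every α ∈ (0, α̃] and every j ∈ {1,…,ω}: f^{a_j}(x̄ + α·d) − f^{a_j}(x̄) − ρ·α·𝓕^a(x̄, d)·e ∈ −K. -/

import Mathlib

open Set Pointwise

/-- `𝓕^a(x, d) = max_{1 ≤ j ≤ ω} ψ_e(∇f^{a_j}(x)ᵀ d)`. -/
noncomputable def Fcal {n m p : ℕ} (ψ : EuclideanSpace ℝ (Fin m) → ℝ)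
    (f : Fin p → EuclideanSpace ℝ (Fin n) → EuclideanSpace ℝ (Fin m))
    {ω : ℕ} (hω : 0 < ω) (a : Fin ω → Fin p)
    (x d : EuclideanSpace ℝ (Fin n)) : ℝ :=
  Finset.univ.sup' (Finset.univ_nonempty_iff.mpr ⟨⟨0, hω⟩⟩) fun j =>
    ψ (fderiv ℝ (f (a j)) x d)

/-- If `𝓕^a(x̄, d) < 0` and `ρ ∈ (0,1)`, then there is `α̃ > 0` such
that for all `α ∈ (0, α̃]` and all `j`:
`f^{a_j}(x̄ + α•d) - f^{a_j}(x̄) - ρ·α·𝓕^a(x̄, d)·e ∈ -K`. -/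
theorem statement10 {n m p : ℕ} (K : Set (EuclideanSpace ℝ (Fin m)))
    (hKne : K.Nonempty) (hKclosed : IsClosed K) (hKconv : Convex ℝ K)
    (hKcone : ∀ t : ℝ, 0 ≤ t → ∀ y ∈ K, t • y ∈ K)
    (hKpointed : K ∩ (-K) = {0}) (hKsolid : (interior K).Nonempty)
    (e : EuclideanSpace ℝ (Fin m)) (he : e ∈ interior K)
    (ψ : EuclideanSpace ℝ (Fin m) → ℝ)
    (hψ : ∀ y, IsLeast {t : ℝ | t • e - y ∈ K} (ψ y))
    (f : Fin p → EuclideanSpace ℝ (Fin n) → EuclideanSpace ℝ (Fin m))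
    (hf : ∀ i, ContDiff ℝ 1 (f i))
    {ω : ℕ} (hω : 0 < ω) (a : Fin ω → Fin p)
    (xb d : EuclideanSpace ℝ (Fin n))
    (hd : Fcal ψ f hω a xb d < 0)
    (ρ : ℝ) (hρ0 : 0 < ρ) (hρ1 : ρ < 1) :
    ∃ αt : ℝ, 0 < αt ∧ ∀ α : ℝ, 0 < α → α ≤ αt → ∀ j : Fin ω,
      f (a j) (xb + α • d) - f (a j) xb - (ρ * α * Fcal ψ f hω a xb d) • e ∈ -K := by
  classical
  set F := Fcal ψ f hω a xb d with hF
  have heK : e ∈ K := interior_subset he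
  have hadd : ∀ x ∈ K, ∀ y ∈ K, x + y ∈ K := by
    intro x hx y hy
    have h2 := hKconv hx hy (by norm_num : (0:ℝ) ≤ 1/2) (by norm_num : (0:ℝ) ≤ 1/2)
      (by norm_num)
    have h3 := hKcone 2 (by norm_num) _ h2
    have : (2:ℝ) • ((1/2:ℝ) • x + (1/2:ℝ) • y) = x + y := by module
    rwa [this] at h3
  obtain ⟨ε, hε, hball⟩ := Metric.isOpen_iff.mp isOpen_interior e he
  set c := (ρ - 1) * F with hc
  have hcpos : 0 < c := mul_pos_of_neg_of_neg (by linarith) hd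
  have hw : ∀ j : Fin ω, F • e - fderiv ℝ (f (a j)) xb d ∈ K := by
    intro j
    set g := fderiv ℝ (f (a j)) xb d with hg
    have h1 : ψ g • e - g ∈ K := (hψ g).1
    have h2 : ψ g ≤ F := Finset.le_sup' (fun j => ψ (fderiv ℝ (f (a j)) xb d))
      (Finset.mem_univ j)
    have h3 : (F - ψ g) • e ∈ K := hKcone _ (by linarith) _ heK
    have h4 := hadd _ h1 _ h3
    have : ψ g • e - g + (F - ψ g) • e = F • e - g := by module
    rwa [this] at h4
  have hder : ∀ j : Fin ω, HasDerivAt (fun α : ℝ => f (a j) (xb + α • d))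
      (fderiv ℝ (f (a j)) xb d) 0 := by
    intro j
    have hL : HasDerivAt (fun α : ℝ => xb + α • d) d 0 := by
      simpa using ((hasDerivAt_id (0:ℝ)).smul_const d).const_add xb
    have hF' : HasFDerivAt (f (a j)) (fderiv ℝ (f (a j)) xb) (xb + (0:ℝ) • d) := by
      simpa using ((hf (a j)).differentiable one_ne_zero).differentiableAt.hasFDerivAt
    exact hF'.comp_hasDerivAt 0 hL
  have hlil : ∀ j : Fin ω, ∀ᶠ α : ℝ in nhds 0,
      ‖f (a j) (xb + α • d) - f (a j) xb - α • fderiv ℝ (f (a j)) xb d‖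
        ≤ (c * ε / 2) * ‖α‖ := by
    intro j
    have h := (hasDerivAt_iff_isLittleO.mp (hder j)).def
      (by positivity : (0:ℝ) < c * ε / 2)
    simpa using h
  have hall : ∀ᶠ α : ℝ in nhds 0, ∀ j : Fin ω,
      ‖f (a j) (xb + α • d) - f (a j) xb - α • fderiv ℝ (f (a j)) xb d‖
        ≤ (c * ε / 2) * ‖α‖ := Filter.eventually_all.mpr hlil
  obtain ⟨δ, hδ, hδall⟩ := Metric.eventually_nhds_iff.mp hall
  refine ⟨δ / 2, by positivity, ?_⟩
  intro α hα0 hαδ j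
  have hαδ' : dist α 0 < δ := by
    rw [Real.dist_eq, sub_zero, abs_of_pos hα0]; linarith
  have hbound := hδall hαδ' j
  set g := fderiv ℝ (f (a j)) xb d with hg
  set r := f (a j) (xb + α • d) - f (a j) xb - α • g with hr
  rw [Set.mem_neg]
  have hdecomp : -(f (a j) (xb + α • d) - f (a j) xb - (ρ * α * F) • e)
      = α • (F • e - g) + ((c * α) • e - r) := by
    rw [hr, hc]; module
  rw [hdecomp]
  have hterm1 : α • (F • e - g) ∈ K := hKcone α hα0.le _ (hw j)
  have hcα : 0 < c * α := mul_pos hcpos hα0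
  have hterm2 : (c * α) • e - r ∈ K := by
    have hvnorm : ‖(c * α)⁻¹ • r‖ < ε := by
      rw [norm_smul, norm_inv, Real.norm_eq_abs, abs_of_pos hcα]
      rw [Real.norm_eq_abs, abs_of_pos hα0] at hbound
      calc (c * α)⁻¹ * ‖r‖ ≤ (c * α)⁻¹ * (c * ε / 2 * α) := by
            apply mul_le_mul_of_nonneg_left hbound (by positivity)
        _ = ε / 2 := by field_simp
        _ < ε := by linarith
    have hmem : e - (c * α)⁻¹ • r ∈ K := by
      apply interior_subset
      apply hball
      rw [Metric.mem_ball, dist_eq_norm]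
      simpa using hvnorm
    have h5 := hKcone (c * α) hcα.le _ hmem
    have : (c * α) • (e - (c * α)⁻¹ • r) = (c * α) • e - r := by
      rw [smul_sub, smul_smul, mul_inv_cancel₀ hcα.ne', one_smul]
    rwa [this] at h5
  exact hadd _ hterm1 _ hterm2
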